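/- arXiv:1901.06789 — 7 statements merged into one kernel-verified Lean document; each statement's English description precedes it below -/
import Mathlib

section
/- Let X be a random vector in ℝⁿ with probability density f : ℝⁿ → [0,∞) with respect to Lebesgue measure, and let u ∈ ℝⁿ be a unit vector. Let g : ℝ → [0,∞) be a probability density (with respect to Lebesgue measure on ℝ) of ⟨X,u⟩, i.e., a density of the pushforward of the measure f·(Lebesgue) under the map x ↦ ⟨x,u⟩. Suppose the limits I_1(X·u) = lim_{ε→0⁺} (1/ε) ∫_ℝ |g(t) − g(t−ε)| dt and I_1(X)_u = lim_{ε→0⁺} (1/ε) ∫_{ℝⁿ} |f(x) − f(x−εu)| dx both exist as real numbers. Then I_1(X·u) ≤ I_1(X)_u. -/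
open MeasureTheory Filter Topology
open scoped InnerProductSpace ENNReal

/-- Data-processing for the directional L1-Fisher information: projecting onto a
unit direction does not increase the L1-Fisher information (Lemma `l1_direction`). -/
theorem l1Fisher_projection_le
    (n : ℕ)
    (f : EuclideanSpace ℝ (Fin n) → ℝ) (hf0 : ∀ x, 0 ≤ f x)
    (hfm : Measurable f) (hf1 : ∫ x, f x = 1)
    (u : EuclideanSpace ℝ (Fin n)) (hu : ‖u‖ = 1)
    (g : ℝ → ℝ) (hg0 : ∀ t, 0 ≤ g t) (hgm : Measurable g)
    (hg : Measure.map (fun x => ⟪x, u⟫_ℝ)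
        (volume.withDensity (fun x => ENNReal.ofReal (f x)))
      = volume.withDensity (fun t => ENNReal.ofReal (g t)))
    (Ig If : ℝ)
    (hIg : Tendsto (fun ε : ℝ => (1 / ε) * ∫ t : ℝ, |g t - g (t - ε)|)
      (𝓝[>] (0 : ℝ)) (𝓝 Ig))
    (hIf : Tendsto (fun ε : ℝ => (1 / ε) * ∫ x : EuclideanSpace ℝ (Fin n), |f x - f (x - ε • u)|)
      (𝓝[>] (0 : ℝ)) (𝓝 If)) :
    Ig ≤ If := by
  have hπc : Continuous (fun x : EuclideanSpace ℝ (Fin n) => ⟪x, u⟫_ℝ) :=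
    continuous_id.inner continuous_const
  have hπ : Measurable (fun x : EuclideanSpace ℝ (Fin n) => ⟪x, u⟫_ℝ) := hπc.measurable
  have hfint : Integrable f := by
    by_contra h
    rw [integral_undef h] at hf1
    norm_num at hf1
  have hfl : ∫⁻ x, ENNReal.ofReal (f x) = 1 := by
    rw [← ofReal_integral_eq_lintegral_ofReal hfint (Filter.Eventually.of_forall hf0), hf1,
      ENNReal.ofReal_one]
  have hgl : ∫⁻ t, ENNReal.ofReal (g t) = 1 := by
    have h1 := congrArg (fun μ : Measure ℝ => μ Set.univ) hg
    simp only [Measure.map_apply hπ MeasurableSet.univ, Set.preimage_univ,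
      withDensity_apply _ MeasurableSet.univ, setLIntegral_univ] at h1
    rw [← h1, hfl]
  have hgint : Integrable g := by
    refine ⟨hgm.aestronglyMeasurable, ?_⟩
    rw [hasFiniteIntegral_iff_ofReal (Filter.Eventually.of_forall hg0), hgl]
    exact ENNReal.one_lt_top
  have key : ∀ ψ : ℝ → ℝ, Measurable ψ →
      ∫ t, ψ t * g t = ∫ x, ψ (⟪x, u⟫_ℝ) * f x := by
    intro ψ hψ
    have h1 : ∫ t, ψ t ∂(volume.withDensity (fun t => ENNReal.ofReal (g t)))
        = ∫ t, ψ t * g t := by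
      rw [show (fun t => ENNReal.ofReal (g t)) = fun t => ((g t).toNNReal : ℝ≥0∞) from rfl,
        integral_withDensity_eq_integral_smul hgm.real_toNNReal ψ]
      congr 1; funext t
      simp [NNReal.smul_def, Real.coe_toNNReal _ (hg0 t), mul_comm]
    have h2 : ∫ t, ψ t ∂(Measure.map (fun x => ⟪x, u⟫_ℝ)
        (volume.withDensity (fun x => ENNReal.ofReal (f x))))
        = ∫ x, ψ (⟪x, u⟫_ℝ) ∂(volume.withDensity (fun x => ENNReal.ofReal (f x))) :=
      integral_map hπ.aemeasurable hψ.aestronglyMeasurable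
    have h3 : ∫ x, ψ (⟪x, u⟫_ℝ) ∂(volume.withDensity (fun x => ENNReal.ofReal (f x)))
        = ∫ x, ψ (⟪x, u⟫_ℝ) * f x := by
      rw [show (fun x => ENNReal.ofReal (f x)) = fun x => ((f x).toNNReal : ℝ≥0∞) from rfl,
        integral_withDensity_eq_integral_smul hfm.real_toNNReal _]
      congr 1; funext x
      simp [NNReal.smul_def, Real.coe_toNNReal _ (hf0 x), mul_comm]
    rw [← h1, ← hg, h2, h3]
  have hinner : ∀ (ε : ℝ) (x : EuclideanSpace ℝ (Fin n)),
      ⟪x - ε • u, u⟫_ℝ = ⟪x, u⟫_ℝ - ε := by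
    intro ε x
    rw [inner_sub_left, real_inner_smul_left, real_inner_self_eq_norm_sq, hu]
    ring
  have main : ∀ ε : ℝ, 0 < ε →
      (∫ t, |g t - g (t - ε)|) ≤ ∫ x, |f x - f (x - ε • u)| := by
    intro ε hε
    set φ : ℝ → ℝ := fun t => if 0 ≤ g t - g (t - ε) then 1 else -1 with hφdef
    have hφm : Measurable φ :=
      Measurable.ite
        (measurableSet_le measurable_const
          (hgm.sub (hgm.comp (measurable_id.sub measurable_const))))
        measurable_const measurable_const
    have hφb : ∀ t, |φ t| ≤ 1 := by
      intro t
      simp only [hφdef]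
      by_cases h : 0 ≤ g t - g (t - ε)
      · rw [if_pos h]; norm_num
      · rw [if_neg h]; norm_num
    have hgε : Integrable (fun t => g (t - ε)) := hgint.comp_sub_right ε
    have hfε : Integrable (fun x => f (x - ε • u)) := hfint.comp_sub_right (ε • u)
    have habs : ∀ t, |g t - g (t - ε)| = φ t * (g t - g (t - ε)) := by
      intro t
      simp only [hφdef]
      by_cases h : 0 ≤ g t - g (t - ε)
      · rw [if_pos h, one_mul, abs_of_nonneg h]
      · rw [if_neg h, abs_of_neg (lt_of_not_ge h)]; ring
    have hφg : Integrable (fun t => φ t * g t) :=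
      hgint.bdd_mul hφm.aestronglyMeasurable (c := 1) (Filter.Eventually.of_forall fun t => by
        rw [Real.norm_eq_abs]; exact hφb t)
    have hφgε : Integrable (fun t => φ t * g (t - ε)) :=
      hgε.bdd_mul hφm.aestronglyMeasurable (c := 1) (Filter.Eventually.of_forall fun t => by
        rw [Real.norm_eq_abs]; exact hφb t)
    have hφf : Integrable (fun x => φ (⟪x, u⟫_ℝ) * f x) :=
      hfint.bdd_mul (hφm.comp hπ).aestronglyMeasurable (c := 1) (Filter.Eventually.of_forall fun x => by
        rw [Real.norm_eq_abs]; exact hφb _)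
    have hφfε : Integrable (fun x => φ (⟪x, u⟫_ℝ) * f (x - ε • u)) :=
      hfε.bdd_mul (hφm.comp hπ).aestronglyMeasurable (c := 1) (Filter.Eventually.of_forall fun x => by
        rw [Real.norm_eq_abs]; exact hφb _)
    have step1 : ∫ t, |g t - g (t - ε)| = (∫ t, φ t * g t) - ∫ t, φ t * g (t - ε) := by
      rw [← integral_sub hφg hφgε]
      congr 1; funext t
      rw [habs t, mul_sub]
    have step2 : ∫ t, φ t * g (t - ε) = ∫ s, φ (s + ε) * g s := by
      rw [← integral_add_right_eq_self (fun t => φ t * g (t - ε)) ε]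
      congr 1; funext s
      simp
    have step3 : ∫ t, φ t * g t = ∫ x, φ (⟪x, u⟫_ℝ) * f x := key φ hφm
    have step4 : ∫ s, φ (s + ε) * g s = ∫ x, φ (⟪x, u⟫_ℝ) * f (x - ε • u) := by
      rw [key (fun s => φ (s + ε)) (hφm.comp (measurable_id.add_const ε))]
      rw [← integral_sub_right_eq_self (fun y => φ (⟪y, u⟫_ℝ + ε) * f y) (ε • u)]
      congr 1; funext x
      rw [hinner ε x]
      ring_nf
    have step5 : (∫ x, φ (⟪x, u⟫_ℝ) * f x) - (∫ x, φ (⟪x, u⟫_ℝ) * f (x - ε • u))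
        = ∫ x, φ (⟪x, u⟫_ℝ) * (f x - f (x - ε • u)) := by
      rw [← integral_sub hφf hφfε]
      congr 1; funext x
      ring
    rw [step1, step2, step3, step4, step5]
    refine integral_mono (by exact (hφf.sub hφfε).congr (Filter.Eventually.of_forall fun x => by simp only [Pi.sub_apply]; ring)) ((hfint.sub hfε).abs) (fun x => ?_)
    calc φ (⟪x, u⟫_ℝ) * (f x - f (x - ε • u))
        ≤ |φ (⟪x, u⟫_ℝ) * (f x - f (x - ε • u))| := le_abs_self _
      _ = |φ (⟪x, u⟫_ℝ)| * |f x - f (x - ε • u)| := abs_mul _ _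
      _ ≤ |f x - f (x - ε • u)| :=
          mul_le_of_le_one_left (abs_nonneg _) (hφb _)
  have hev : ∀ᶠ ε in 𝓝[>] (0 : ℝ),
      (1 / ε) * (∫ t, |g t - g (t - ε)|)
        ≤ (1 / ε) * ∫ x, |f x - f (x - ε • u)| := by
    filter_upwards [self_mem_nhdsWithin] with ε hε
    have hε' : (0:ℝ) < ε := hε
    exact mul_le_mul_of_nonneg_left (main ε hε') (by positivity)
  exact le_of_tendsto_of_tendsto hIg hIf hev
end

section
/- Let X = (X_1,…,X_n) be a random vector in ℝⁿ with probability density f : ℝⁿ → [0,∞) with respect to Lebesgue measure, and for each i = 1,…,n let f_i : ℝ → [0,∞) be a probability density (with respect to Lebesgue measure on ℝ) of the coordinate X_i, i.e., a density of the pushforward of f·(Lebesgue) under x ↦ x_i. Suppose that for each i the limits I_1(X_i) = lim_{ε→0⁺} (1/ε) ∫_ℝ |f_i(t) − f_i(t−ε)| dt and I_1(X)_{e_i} = lim_{ε→0⁺} (1/ε) ∫_{ℝⁿ} |f(x) − f(x−ε e_i)| dx exist as real numbers. Then ∑_{i=1}^n I_1(X_i) ≤ ∑_{i=1}^n I_1(X)_{e_i}.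 -/
open MeasureTheory Filter Topology
open scoped ENNReal

lemma key_ineq (n : ℕ)
    (f : EuclideanSpace ℝ (Fin n) → ℝ) (hf0 : ∀ x, 0 ≤ f x)
    (hfm : Measurable f) (hf1 : ∫ x, f x = 1)
    (g : ℝ → ℝ) (hg0 : ∀ t, 0 ≤ g t) (hgm : Measurable g) (i : Fin n)
    (hg : Measure.map (fun x : EuclideanSpace ℝ (Fin n) => x i)
        (volume.withDensity (fun x => ENNReal.ofReal (f x)))
      = volume.withDensity (fun t => ENNReal.ofReal (g t)))
    (ε : ℝ) :
    ∫ t : ℝ, |g t - g (t - ε)| ≤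
      ∫ x : EuclideanSpace ℝ (Fin n), |f x - f (x - ε • EuclideanSpace.single i 1)| := by
  set v : EuclideanSpace ℝ (Fin n) := ε • EuclideanSpace.single i 1 with hv
  -- shorthand
  set G : ℝ → ℝ≥0∞ := fun t => ENNReal.ofReal (g t) with hG
  set G' : ℝ → ℝ≥0∞ := fun t => ENNReal.ofReal (g (t - ε)) with hG'
  set F : EuclideanSpace ℝ (Fin n) → ℝ≥0∞ := fun x => ENNReal.ofReal (f x) with hF
  set F' : EuclideanSpace ℝ (Fin n) → ℝ≥0∞ := fun x => ENNReal.ofReal (f (x - v)) with hF'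
  set D : EuclideanSpace ℝ (Fin n) → ℝ≥0∞ := fun x => ENNReal.ofReal |f x - f (x - v)| with hD
  have hsubm : Measurable fun x : EuclideanSpace ℝ (Fin n) => x - v :=
    measurable_id.sub measurable_const
  have hsubm1 : Measurable fun t : ℝ => t - ε := measurable_id.sub measurable_const
  have hFm : Measurable F := hfm.ennreal_ofReal
  have hF'm : Measurable F' := (hfm.comp hsubm).ennreal_ofReal
  have hGm : Measurable G := hgm.ennreal_ofReal
  have hG'm : Measurable G' := (hgm.comp hsubm1).ennreal_ofReal
  have hDm : Measurable D := ((hfm.sub (hfm.comp hsubm)).abs).ennreal_ofReal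
  have hfi : Integrable f := by
    by_contra h
    rw [integral_undef h] at hf1; norm_num at hf1
  -- masses
  have hF1 : ∫⁻ x, F x = 1 := by
    rw [← ofReal_integral_eq_lintegral_ofReal hfi (ae_of_all _ hf0), hf1]; simp
  have hF'1 : ∫⁻ x, F' x = 1 := by
    rw [← hF1]
    exact lintegral_sub_right_eq_self F v
  -- marginal identity
  have marg : ∀ φ : ℝ → ℝ≥0∞, Measurable φ →
      ∫⁻ t : ℝ, φ t * G t = ∫⁻ x : EuclideanSpace ℝ (Fin n), φ (x i) * F x := by
    intro φ hφ
    have h1 : ∫⁻ t : ℝ, φ t * G t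
        = ∫⁻ t, φ t ∂(volume.withDensity (fun t => ENNReal.ofReal (g t))) := by
      rw [lintegral_withDensity_eq_lintegral_mul _ (hgm.ennreal_ofReal) hφ]
      simp [hG, mul_comm]
    rw [h1, ← hg, lintegral_map hφ ((measurable_pi_apply i).comp (WithLp.measurable_ofLp 2 _)),
      lintegral_withDensity_eq_lintegral_mul _ (hfm.ennreal_ofReal)
        (show Measurable fun a : EuclideanSpace ℝ (Fin n) => φ (a i) from
          hφ.comp ((measurable_pi_apply i).comp (WithLp.measurable_ofLp 2 _)))]
    simp [hF, mul_comm]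
  -- shifted marginal identity
  have marg' : ∀ φ : ℝ → ℝ≥0∞, Measurable φ →
      ∫⁻ t : ℝ, φ t * G' t = ∫⁻ x : EuclideanSpace ℝ (Fin n), φ (x i) * F' x := by
    intro φ hφ
    have h1 : ∫⁻ t : ℝ, φ t * G' t = ∫⁻ s : ℝ, φ (s + ε) * G s := by
      have := lintegral_add_right_eq_self (μ := volume) (fun t => φ t * G' t) ε
      rw [← this]
      simp [hG', hG]
    have h2 := marg (fun s => φ (s + ε)) (hφ.comp (measurable_id.add_const ε))
    have h3 : ∫⁻ x : EuclideanSpace ℝ (Fin n), φ (x i + ε) * F x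
        = ∫⁻ x : EuclideanSpace ℝ (Fin n), φ (x i) * F' x := by
      have := lintegral_add_right_eq_self (μ := volume)
        (fun x : EuclideanSpace ℝ (Fin n) => φ (x i) * F' x) v
      rw [← this]
      congr 1
      funext x
      have hxv : (x + v : EuclideanSpace ℝ (Fin n)) i = x i + ε := by
        simp [hv, EuclideanSpace.single_apply]
      have hxv2 : (x + v : EuclideanSpace ℝ (Fin n)) - v = x := by abel
      simp only [hF', hxv, hxv2, hF]
    rw [h1, h2, h3]
  -- masses of G
  have hG1 : ∫⁻ t : ℝ, G t = 1 := by
    have h := marg (fun _ => 1) measurable_const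
    simp only [one_mul] at h
    rw [h, hF1]
  have hG'1 : ∫⁻ t : ℝ, G' t = 1 := by
    rw [← hG1]; exact lintegral_sub_right_eq_self G ε
  -- the indicator of A and its complement
  set χ : ℝ → ℝ≥0∞ := fun t => if g (t - ε) ≤ g t then 1 else 0 with hχ
  set χ' : ℝ → ℝ≥0∞ := fun t => if g (t - ε) ≤ g t then 0 else 1 with hχ'
  have hAms : MeasurableSet {t : ℝ | g (t - ε) ≤ g t} :=
    measurableSet_le (hgm.comp hsubm1) hgm
  have hχm : Measurable χ := Measurable.ite hAms measurable_const measurable_const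
  have hχ'm : Measurable χ' := Measurable.ite hAms measurable_const measurable_const
  have hχsum : ∀ t, χ t + χ' t = 1 := by
    intro t; by_cases h : g (t - ε) ≤ g t <;> simp [hχ, hχ', h]
  -- first half
  have hT1 : ∫⁻ t : ℝ, (G t - G' t) ≤ ∫⁻ x : EuclideanSpace ℝ (Fin n), χ (x i) * D x := by
    have e1 : (fun t : ℝ => G t - G' t) = fun t => χ t * G t - χ t * G' t := by
      funext t
      by_cases h : g (t - ε) ≤ g t
      · simp [hχ, h]
      · have hle : G t ≤ G' t := ENNReal.ofReal_le_ofReal (le_of_not_ge h)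
        simp [hχ, h, tsub_eq_zero_of_le hle]
    have hfin : ∫⁻ t : ℝ, χ t * G' t ≠ ∞ := by
      have hb : ∫⁻ t : ℝ, χ t * G' t ≤ ∫⁻ t : ℝ, G' t := by
        refine lintegral_mono fun t => ?_
        by_cases h : g (t - ε) ≤ g t <;> simp [hχ, h]
      exact ne_of_lt (lt_of_le_of_lt hb (by rw [hG'1]; exact ENNReal.one_lt_top))
    have hle2 : (fun t : ℝ => χ t * G' t) ≤ᵐ[volume] fun t => χ t * G t := by
      refine ae_of_all _ fun t => ?_
      by_cases h : g (t - ε) ≤ g t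
      · simp only [hχ, h, if_true, one_mul]
        exact ENNReal.ofReal_le_ofReal h
      · simp [hχ, h]
    rw [e1, lintegral_sub (g := fun t => χ t * G' t) (hχm.mul hG'm) hfin hle2, marg χ hχm, marg' χ hχm]
    refine le_trans (lintegral_sub_le _ _
      ((hχm.comp ((measurable_pi_apply i).comp (WithLp.measurable_ofLp 2 _))).mul hF'm)) (lintegral_mono fun x => ?_)
    rw [tsub_le_iff_right]
    calc χ (x i) * F x ≤ χ (x i) * ((F x - F' x) + F' x) := by
          exact mul_le_mul_right le_tsub_add _
      _ = χ (x i) * (F x - F' x) + χ (x i) * F' x := by rw [mul_add]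
      _ ≤ χ (x i) * D x + χ (x i) * F' x := by
          refine add_le_add_left (mul_le_mul_right ?_ _) _
          refine le_trans (le_of_eq (ENNReal.ofReal_sub _ (hf0 _)).symm) ?_
          exact ENNReal.ofReal_le_ofReal (le_abs_self _)
  -- second half
  have hT2 : ∫⁻ t : ℝ, (G' t - G t) ≤ ∫⁻ x : EuclideanSpace ℝ (Fin n), χ' (x i) * D x := by
    have e1 : (fun t : ℝ => G' t - G t) = fun t => χ' t * G' t - χ' t * G t := by
      funext t
      by_cases h : g (t - ε) ≤ g t
      · have hle : G' t ≤ G t := ENNReal.ofReal_le_ofReal h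
        simp [hχ', h, tsub_eq_zero_of_le hle]
      · simp [hχ', h]
    have hfin : ∫⁻ t : ℝ, χ' t * G t ≠ ∞ := by
      have hb : ∫⁻ t : ℝ, χ' t * G t ≤ ∫⁻ t : ℝ, G t := by
        refine lintegral_mono fun t => ?_
        by_cases h : g (t - ε) ≤ g t <;> simp [hχ', h]
      exact ne_of_lt (lt_of_le_of_lt hb (by rw [hG1]; exact ENNReal.one_lt_top))
    have hle2 : (fun t : ℝ => χ' t * G t) ≤ᵐ[volume] fun t => χ' t * G' t := by
      refine ae_of_all _ fun t => ?_
      by_cases h : g (t - ε) ≤ g t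
      · simp [hχ', h]
      · simp only [hχ', h, if_false, one_mul]
        exact ENNReal.ofReal_le_ofReal (le_of_not_ge h)
    rw [e1, lintegral_sub (g := fun t => χ' t * G t) (hχ'm.mul hGm) hfin hle2, marg χ' hχ'm, marg' χ' hχ'm]
    refine le_trans (lintegral_sub_le _ _
      ((hχ'm.comp ((measurable_pi_apply i).comp (WithLp.measurable_ofLp 2 _))).mul hFm)) (lintegral_mono fun x => ?_)
    rw [tsub_le_iff_right]
    calc χ' (x i) * F' x ≤ χ' (x i) * ((F' x - F x) + F x) := by
          exact mul_le_mul_right le_tsub_add _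
      _ = χ' (x i) * (F' x - F x) + χ' (x i) * F x := by rw [mul_add]
      _ ≤ χ' (x i) * D x + χ' (x i) * F x := by
          refine add_le_add_left (mul_le_mul_right ?_ _) _
          refine le_trans (le_of_eq (ENNReal.ofReal_sub _ (hf0 _)).symm) ?_
          refine ENNReal.ofReal_le_ofReal ?_
          rw [abs_sub_comm]
          exact le_abs_self _
  -- decomposition of the absolute difference on ℝ
  have habs : ∫⁻ t : ℝ, ENNReal.ofReal |g t - g (t - ε)|
      = (∫⁻ t : ℝ, (G t - G' t)) + ∫⁻ t : ℝ, (G' t - G t) := by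
    rw [← lintegral_add_left (f := fun t => G t - G' t) (hGm.sub hG'm)]
    congr 1; funext t
    rcases le_total (g (t - ε)) (g t) with h | h
    · rw [abs_of_nonneg (by linarith), tsub_eq_zero_of_le (ENNReal.ofReal_le_ofReal h),
        add_zero, ENNReal.ofReal_sub _ (hg0 _)]
    · rw [abs_of_nonpos (by linarith), tsub_eq_zero_of_le (ENNReal.ofReal_le_ofReal h),
        zero_add, neg_sub, ENNReal.ofReal_sub _ (hg0 _)]
  -- recombination on ℝⁿ
  have hsum : (∫⁻ x : EuclideanSpace ℝ (Fin n), χ (x i) * D x)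
      + (∫⁻ x : EuclideanSpace ℝ (Fin n), χ' (x i) * D x)
      = ∫⁻ x : EuclideanSpace ℝ (Fin n), D x := by
    rw [← lintegral_add_left (show Measurable fun x : EuclideanSpace ℝ (Fin n) => χ (x i) * D x
      from (hχm.comp ((measurable_pi_apply i).comp (WithLp.measurable_ofLp 2 _))).mul hDm)]
    congr 1; funext x
    rw [← add_mul, hχsum (x i), one_mul]
  have main : ∫⁻ t : ℝ, ENNReal.ofReal |g t - g (t - ε)|
      ≤ ∫⁻ x : EuclideanSpace ℝ (Fin n), D x := by
    rw [habs, ← hsum]; exact add_le_add hT1 hT2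
  have hDle : ∫⁻ x : EuclideanSpace ℝ (Fin n), D x ≤ 2 := by
    have hb : ∀ x : EuclideanSpace ℝ (Fin n), D x ≤ F x + F' x := by
      intro x
      rw [← ENNReal.ofReal_add (hf0 _) (hf0 _)]
      refine ENNReal.ofReal_le_ofReal (abs_le.mpr ⟨?_, ?_⟩)
      · have := hf0 x; have := hf0 (x - v); linarith
      · have := hf0 x; have := hf0 (x - v); linarith
    calc ∫⁻ x : EuclideanSpace ℝ (Fin n), D x
        ≤ ∫⁻ x : EuclideanSpace ℝ (Fin n), (F x + F' x) := lintegral_mono hb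
      _ = 2 := by rw [lintegral_add_left hFm, hF1, hF'1]; norm_num
  rw [integral_eq_lintegral_of_nonneg_ae (ae_of_all _ fun t => abs_nonneg _)
      (show AEStronglyMeasurable (fun t : ℝ => |g t - g (t - ε)|) volume from
        ((hgm.sub (hgm.comp hsubm1)).abs.aestronglyMeasurable)),
    integral_eq_lintegral_of_nonneg_ae (ae_of_all _ fun x => abs_nonneg _)
      (show AEStronglyMeasurable (fun x : EuclideanSpace ℝ (Fin n) => |f x - f (x - v)|) volume from
        ((hfm.sub (hfm.comp hsubm)).abs.aestronglyMeasurable))]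
  exact ENNReal.toReal_mono (ne_of_lt (lt_of_le_of_lt hDle (by norm_num))) main

/-- Superadditivity of the L1-Fisher information (Theorem `l1_super`):
the sum of the L1-Fisher informations of the coordinate marginals is bounded by
the sum of the directional L1-Fisher informations along the standard basis. -/
theorem l1Fisher_superadditive
    (n : ℕ)
    (f : EuclideanSpace ℝ (Fin n) → ℝ) (hf0 : ∀ x, 0 ≤ f x)
    (hfm : Measurable f) (hf1 : ∫ x, f x = 1)
    (g : Fin n → ℝ → ℝ) (hg0 : ∀ i t, 0 ≤ g i t) (hgm : ∀ i, Measurable (g i))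
    (hg : ∀ i, Measure.map (fun x : EuclideanSpace ℝ (Fin n) => x i)
        (volume.withDensity (fun x => ENNReal.ofReal (f x)))
      = volume.withDensity (fun t => ENNReal.ofReal (g i t)))
    (I J : Fin n → ℝ)
    (hI : ∀ i, Tendsto (fun ε : ℝ => (1 / ε) * ∫ t : ℝ, |g i t - g i (t - ε)|)
      (𝓝[>] (0 : ℝ)) (𝓝 (I i)))
    (hJ : ∀ i, Tendsto (fun ε : ℝ =>
        (1 / ε) * ∫ x : EuclideanSpace ℝ (Fin n), |f x - f (x - ε • EuclideanSpace.single i 1)|)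
      (𝓝[>] (0 : ℝ)) (𝓝 (J i))) :
    ∑ i, I i ≤ ∑ i, J i := by
  refine Finset.sum_le_sum fun i _ => ?_
  refine le_of_tendsto_of_tendsto (hI i) (hJ i) ?_
  filter_upwards [self_mem_nhdsWithin] with ε hε
  have hε' : (0 : ℝ) < ε := hε
  exact mul_le_mul_of_nonneg_left
    (key_ineq n f hf0 hfm hf1 (g i) (hg0 i) (hgm i) i (hg i) ε)
    (one_div_nonneg.mpr hε'.le)
end

section
/- Let N ≥ 1 be an integer, τ > 0 a real number, and let [a_1,b_1],…,[a_N,b_N] be N pairwise disjoint closed intervals in ℝ with a_i < b_i for each i. Let f : ℝ → [0,∞) be the function with f(x) = τ for x ∈ ∪_{i=1}^N [a_i,b_i] and f(x) = 0 otherwise, and suppose f is a probability density, i.e., τ · ∑_{i=1}^N (b_i − a_i) = 1. Then the limit I_1 = lim_{ε→0⁺} (1/ε) ∫_ℝ |f(x) − f(x−ε)| dx exists and equals 2Nτ. -/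
open MeasureTheory Filter Topology

/-- Corollary `step function`: the L1-Fisher information of the uniform density on a
disjoint union of `N` closed intervals with common height `τ` exists and equals `2 N τ`. -/
theorem l1Fisher_step_function
    (N : ℕ) (hN : 1 ≤ N) (τ : ℝ) (hτ : 0 < τ)
    (a b : Fin N → ℝ) (hab : ∀ i, a i < b i)
    (hdisj : ∀ i j, i ≠ j → Disjoint (Set.Icc (a i) (b i)) (Set.Icc (a j) (b j)))
    (f : ℝ → ℝ)
    (hf : ∀ x, f x = (⋃ i, Set.Icc (a i) (b i)).indicator (fun _ => τ) x)
    (hprob : τ * ∑ i, (b i - a i) = 1) :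
    Tendsto (fun ε : ℝ => (1 / ε) * ∫ x : ℝ, |f x - f (x - ε)|) (𝓝[>] (0 : ℝ))
      (𝓝 (2 * N * τ)) := by
  -- basic evaluation of f
  have hf1 : ∀ y : ℝ, ∀ i, a i ≤ y → y ≤ b i → f y = τ := by
    intro y i h1 h2
    rw [hf, Set.indicator_of_mem]
    exact Set.mem_iUnion.mpr ⟨i, Set.mem_Icc.mpr ⟨h1, h2⟩⟩
  have hf0 : ∀ y : ℝ, (∀ i, ¬ (a i ≤ y ∧ y ≤ b i)) → f y = 0 := by
    intro y h
    rw [hf, Set.indicator_of_notMem]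
    simpa [Set.mem_iUnion, Set.mem_Icc] using h
  -- the gaps
  have hgap : ∀ i j, i ≠ j → b i < a j ∨ b j < a i := by
    intro i j hij
    by_contra hcon
    push_neg at hcon
    obtain ⟨h1, h2⟩ := hcon
    have hm1 : max (a i) (a j) ∈ Set.Icc (a i) (b i) :=
      Set.mem_Icc.mpr ⟨le_max_left _ _, max_le (hab i).le h1⟩
    have hm2 : max (a i) (a j) ∈ Set.Icc (a j) (b j) :=
      Set.mem_Icc.mpr ⟨le_max_right _ _, max_le h2 (hab j).le⟩
    exact Set.disjoint_left.mp (hdisj i j hij) hm1 hm2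
  -- the minimal scale ε₀
  have hNE : (Finset.univ : Finset (Fin N × Fin N)).Nonempty :=
    ⟨(⟨0, hN⟩, ⟨0, hN⟩), Finset.mem_univ _⟩
  set g : Fin N × Fin N → ℝ := fun p =>
    if p.1 = p.2 then b p.1 - a p.1 else max (a p.2 - b p.1) (a p.1 - b p.2) with hg
  set ε₀ : ℝ := Finset.univ.inf' hNE g with hε₀def
  have hgpos : ∀ p : Fin N × Fin N, 0 < g p := by
    rintro ⟨i, j⟩
    by_cases hij : i = j
    · simp only [hg, hij, if_pos rfl]
      exact sub_pos.mpr (hab j)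
    · simp only [hg, if_neg hij]
      rcases hgap i j hij with h | h
      · exact lt_max_of_lt_left (by linarith)
      · exact lt_max_of_lt_right (by linarith)
  have hε₀pos : 0 < ε₀ := by
    rw [hε₀def, Finset.lt_inf'_iff]
    exact fun p _ => hgpos p
  have hlen : ∀ i, ε₀ ≤ b i - a i := by
    intro i
    have h := Finset.inf'_le g (Finset.mem_univ ((i, i) : Fin N × Fin N))
    have hgii : g (i, i) = b i - a i := if_pos rfl
    rw [hgii] at h
    exact h
  have hsep : ∀ i j, i ≠ j → ε₀ ≤ max (a j - b i) (a i - b j) := by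
    intro i j hij
    have h := Finset.inf'_le g (Finset.mem_univ ((i, j) : Fin N × Fin N))
    have hgij : g (i, j) = max (a j - b i) (a i - b j) := if_neg hij
    rw [hgij] at h
    exact h
  -- eventually the function is constant
  have heq : (fun _ : ℝ => 2 * (N : ℝ) * τ) =ᶠ[𝓝[>] (0 : ℝ)]
      (fun ε : ℝ => (1 / ε) * ∫ x : ℝ, |f x - f (x - ε)|) := by
    filter_upwards [Ioo_mem_nhdsGT_of_mem (Set.left_mem_Ico.mpr hε₀pos)] with ε hε
    obtain ⟨hε1, hε2⟩ := hε
    have hlen' : ∀ i, ε < b i - a i := fun i => lt_of_lt_of_le hε2 (hlen i)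
    have hsep' : ∀ i j, i ≠ j → b i + ε < a j ∨ b j + ε < a i := by
      intro i j hij
      rcases le_max_iff.mp (hsep i j hij) with h | h
      · left; linarith
      · right; linarith
    -- pointwise identity
    have key : ∀ x : ℝ, |f x - f (x - ε)| =
        ∑ i, ((Set.Ico (a i) (a i + ε)).indicator (fun _ => τ) x
            + (Set.Ioc (b i) (b i + ε)).indicator (fun _ => τ) x) := by
      intro x
      by_cases hA : ∃ k, x ∈ Set.Ico (a k) (a k + ε)
      · obtain ⟨k, hk⟩ := hA
        obtain ⟨hx1, hx2⟩ := Set.mem_Ico.mp hk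
        have hfx : f x = τ := hf1 x k hx1 (by linarith [hlen' k])
        have hfxe : f (x - ε) = 0 := by
          apply hf0
          intro j hmem
          by_cases hjk : j = k
          · subst hjk; linarith [hmem.1]
          · rcases hsep' k j (fun h => hjk h.symm) with h | h
            · linarith [hmem.1, hab k]
            · linarith [hmem.2]
        rw [hfx, hfxe, sub_zero, abs_of_pos hτ]
        rw [Finset.sum_eq_single_of_mem k (Finset.mem_univ k)]
        · rw [Set.indicator_of_mem hk, Set.indicator_of_notMem, add_zero]
          intro hmem
          rw [Set.mem_Ioc] at hmem
          linarith [hmem.1, hlen' k]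
        · intro j _ hjk
          rcases hsep' k j (fun h => hjk h.symm) with h | h
          · rw [Set.indicator_of_notMem, Set.indicator_of_notMem, add_zero]
            · intro hmem; rw [Set.mem_Ioc] at hmem
              linarith [hmem.1, hab j, hab k]
            · intro hmem; rw [Set.mem_Ico] at hmem
              linarith [hmem.1, hab k]
          · rw [Set.indicator_of_notMem, Set.indicator_of_notMem, add_zero]
            · intro hmem; rw [Set.mem_Ioc] at hmem
              linarith [hmem.2]
            · intro hmem; rw [Set.mem_Ico] at hmem
              linarith [hmem.2, hab j]
      · by_cases hB : ∃ k, x ∈ Set.Ioc (b k) (b k + ε)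
        · obtain ⟨k, hk⟩ := hB
          obtain ⟨hx1, hx2⟩ := Set.mem_Ioc.mp hk
          have hfx : f x = 0 := by
            apply hf0
            intro j hmem
            by_cases hjk : j = k
            · subst hjk; linarith [hmem.2]
            · rcases hsep' k j (fun h => hjk h.symm) with h | h
              · linarith [hmem.1]
              · linarith [hmem.2, hab k]
          have hfxe : f (x - ε) = τ :=
            hf1 _ k (by linarith [hlen' k]) (by linarith)
          rw [hfx, hfxe, zero_sub, abs_neg, abs_of_pos hτ]
          rw [Finset.sum_eq_single_of_mem k (Finset.mem_univ k)]
          · rw [Set.indicator_of_mem hk, Set.indicator_of_notMem, zero_add]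
            intro hmem
            rw [Set.mem_Ico] at hmem
            linarith [hmem.2, hlen' k]
          · intro j _ hjk
            rcases hsep' k j (fun h => hjk h.symm) with h | h
            · rw [Set.indicator_of_notMem, Set.indicator_of_notMem, add_zero]
              · intro hmem; rw [Set.mem_Ioc] at hmem
                linarith [hmem.1, hab j]
              · intro hmem; rw [Set.mem_Ico] at hmem
                linarith [hmem.1]
            · rw [Set.indicator_of_notMem, Set.indicator_of_notMem, add_zero]
              · intro hmem; rw [Set.mem_Ioc] at hmem
                linarith [hmem.2, hab k]
              · intro hmem; rw [Set.mem_Ico] at hmem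
                linarith [hmem.2, hab j, hab k]
        · push_neg at hA hB
          have hRHS : (∑ i, ((Set.Ico (a i) (a i + ε)).indicator (fun _ => τ) x
              + (Set.Ioc (b i) (b i + ε)).indicator (fun _ => τ) x)) = 0 := by
            apply Finset.sum_eq_zero
            intro j _
            rw [Set.indicator_of_notMem (hA j), Set.indicator_of_notMem (hB j), add_zero]
          rw [hRHS]
          by_cases hx : ∃ k, a k ≤ x ∧ x ≤ b k
          · obtain ⟨k, h1, h2⟩ := hx
            have hxA : ¬ (a k ≤ x ∧ x < a k + ε) := by
              have := hA k; rw [Set.mem_Ico] at this; exact this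
            push_neg at hxA
            have h3 : a k + ε ≤ x := hxA h1
            have hfx : f x = τ := hf1 x k h1 h2
            have hfxe : f (x - ε) = τ := hf1 _ k (by linarith) (by linarith)
            rw [hfx, hfxe, sub_self, abs_zero]
          · push_neg at hx
            have hfx : f x = 0 := by
              apply hf0; intro j hmem
              exact absurd (hx j hmem.1) (not_lt.mpr hmem.2)
            have hfxe : f (x - ε) = 0 := by
              apply hf0
              intro j hmem
              obtain ⟨h1, h2⟩ := hmem
              have hbjx : b j < x := hx j (by linarith)
              have hxB : ¬ (b j < x ∧ x ≤ b j + ε) := by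
                have := hB j; rw [Set.mem_Ioc] at this; exact this
              push_neg at hxB
              have := hxB hbjx
              linarith
            rw [hfx, hfxe, sub_self, abs_zero]
    -- compute the integral
    have hint1 : ∀ i : Fin N,
        Integrable ((Set.Ico (a i) (a i + ε)).indicator (fun _ => τ)) volume := by
      intro i
      rw [integrable_indicator_iff measurableSet_Ico]
      exact (integrableOn_const_iff).mpr (Or.inr measure_Ico_lt_top)
    have hint2 : ∀ i : Fin N,
        Integrable ((Set.Ioc (b i) (b i + ε)).indicator (fun _ => τ)) volume := by
      intro i
      rw [integrable_indicator_iff measurableSet_Ioc]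
      exact (integrableOn_const_iff).mpr (Or.inr measure_Ioc_lt_top)
    have hint12 : ∀ i : Fin N, Integrable (fun x : ℝ =>
        (Set.Ico (a i) (a i + ε)).indicator (fun _ => τ) x
          + (Set.Ioc (b i) (b i + ε)).indicator (fun _ => τ) x) volume :=
      fun i => (hint1 i).add (hint2 i)
    have hint : (∫ x : ℝ, |f x - f (x - ε)|) = 2 * N * τ * ε := by
      have hfun : (fun x : ℝ => |f x - f (x - ε)|) =
          fun x => ∑ i, ((Set.Ico (a i) (a i + ε)).indicator (fun _ => τ) x
            + (Set.Ioc (b i) (b i + ε)).indicator (fun _ => τ) x) := funext key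
      rw [hfun, integral_finset_sum _ (fun i _ => hint12 i)]
      have hterm : ∀ i : Fin N,
          (∫ x : ℝ, ((Set.Ico (a i) (a i + ε)).indicator (fun _ => τ) x
            + (Set.Ioc (b i) (b i + ε)).indicator (fun _ => τ) x)) = 2 * τ * ε := by
        intro i
        rw [integral_add (hint1 i) (hint2 i), integral_indicator_const _ measurableSet_Ico,
          integral_indicator_const _ measurableSet_Ioc, Real.volume_real_Ico, Real.volume_real_Ioc]
        rw [show a i + ε - a i = ε by ring, show b i + ε - b i = ε by ring,
          max_eq_left hε1.le, smul_eq_mul]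
        ring
      rw [Finset.sum_congr rfl (fun i _ => hterm i), Finset.sum_const, Finset.card_univ,
        Fintype.card_fin, nsmul_eq_mul]
      ring
    rw [hint]
    field_simp
  exact Tendsto.congr' heq tendsto_const_nhds
end

section
/- Let f : ℝ → [0,∞) be a probability density with respect to Lebesgue measure which is unimodal: there exists m ∈ ℝ such that f is nondecreasing on (−∞,m] and nonincreasing on [m,∞). Suppose moreover that f is piecewise continuous: there exist finitely many points −∞ = a_0 < a_1 < … < a_M < a_{M+1} = ∞ such that f is continuous on each open interval (a_i, a_{i+1}) and has finite one-sided limits at each a_i for 1 ≤ i ≤ M. Then the limit I_1 = lim_{ε→0⁺} (1/ε) ∫_ℝ |f(x) − f(x−ε)| dx exists and equals 2‖f‖_∞, where ‖f‖_∞ denotes the essential supremum of f with respect to Lebesgue measure. -/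
open MeasureTheory Filter Topology Set

private lemma l1f_max_eq (a b : ℝ) : a + |b - a| + b = 2 * max a b := by
  rcases le_total a b with h | h
  · rw [abs_of_nonneg (by linarith), max_eq_right h]; ring
  · rw [abs_of_nonpos (by linarith), max_eq_left h]; ring

private lemma l1f_ae_ne (c : ℝ) : ∀ᵐ x : ℝ, x ≠ c := by
  rw [ae_iff]
  simpa using measure_singleton (α := ℝ) c

private lemma l1f_shift_Iic (f : ℝ → ℝ) (c ε : ℝ) :
    ∫ x in Iic c, f (x - ε) = ∫ x in Iic (c - ε), f x := by
  rw [← integral_indicator measurableSet_Iic, ← integral_indicator measurableSet_Iic,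
    ← integral_sub_right_eq_self ((Iic (c - ε)).indicator f) ε]
  congr 1; ext x
  simp only [indicator_apply, mem_Iic]
  by_cases h : x ≤ c
  · rw [if_pos h, if_pos (by linarith)]
  · rw [if_neg h, if_neg (by intro h'; exact h (by linarith))]

private lemma l1f_shift_Ioi (f : ℝ → ℝ) (c ε : ℝ) :
    ∫ x in Ioi c, f (x - ε) = ∫ x in Ioi (c - ε), f x := by
  rw [← integral_indicator measurableSet_Ioi, ← integral_indicator measurableSet_Ioi,
    ← integral_sub_right_eq_self ((Ioi (c - ε)).indicator f) ε]
  congr 1; ext x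
  simp only [indicator_apply, mem_Ioi]
  by_cases h : c < x
  · rw [if_pos h, if_pos (by linarith)]
  · rw [if_neg h, if_neg (by intro h'; exact h (by linarith))]

/-- Averaging lemma: if `G ε` is within `η` of `L` a.e. on `Ioc (u ε) (v ε)` for small `ε`,
and `v ε - u ε = ε`, then the averages tend to `L`. -/
private lemma l1f_avg_tendsto (G : ℝ → ℝ → ℝ) (u v : ℝ → ℝ) (L : ℝ)
    (huv : ∀ ε : ℝ, 0 < ε → v ε - u ε = ε)
    (hI : ∀ ε : ℝ, 0 < ε → IntegrableOn (G ε) (Ioc (u ε) (v ε)))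
    (happ : ∀ η : ℝ, 0 < η → ∃ δ > (0:ℝ), ∀ ε : ℝ, 0 < ε → ε < δ →
      ∀ᵐ x : ℝ, x ∈ Ioc (u ε) (v ε) → |G ε x - L| ≤ η) :
    Tendsto (fun ε : ℝ => (1 / ε) * ∫ x in Ioc (u ε) (v ε), G ε x) (𝓝[>] 0) (𝓝 L) := by
  rw [Metric.tendsto_nhdsWithin_nhds]
  intro η hη
  obtain ⟨δ, hδ, h⟩ := happ (η / 2) (by linarith)
  refine ⟨δ, hδ, fun {ε} hε hdist => ?_⟩
  have hε0 : 0 < ε := hε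
  have hεδ : ε < δ := by
    rw [Real.dist_eq, sub_zero, abs_of_pos hε0] at hdist; exact hdist
  have hvol : volume (Ioc (u ε) (v ε)) = ENNReal.ofReal ε := by
    rw [Real.volume_Ioc, huv ε hε0]
  have hfin : volume (Ioc (u ε) (v ε)) < ⊤ := by rw [hvol]; exact ENNReal.ofReal_lt_top
  have hconst : IntegrableOn (fun _ : ℝ => L) (Ioc (u ε) (v ε)) := by
    exact integrableOn_const hfin.ne
  have key : |(∫ x in Ioc (u ε) (v ε), G ε x) - ε * L| ≤ η / 2 * ε := by
    have heq : (∫ x in Ioc (u ε) (v ε), G ε x) - ε * L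
        = ∫ x in Ioc (u ε) (v ε), (G ε x - L) := by
      rw [integral_sub (hI ε hε0) hconst, setIntegral_const, measureReal_def, hvol,
        ENNReal.toReal_ofReal hε0.le, smul_eq_mul]
    rw [heq]
    have hb := norm_setIntegral_le_of_norm_le_const_ae' (μ := volume) (C := η / 2)
      (f := fun x => G ε x - L) hfin ?_
    · rw [measureReal_def, hvol, ENNReal.toReal_ofReal hε0.le, Real.norm_eq_abs] at hb
      exact hb
    · filter_upwards [h ε hε0 hεδ] with x hx hxs
      simpa [Real.norm_eq_abs] using hx hxs
  rw [Real.dist_eq]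
  have hrw : 1 / ε * (∫ x in Ioc (u ε) (v ε), G ε x) - L
      = 1 / ε * ((∫ x in Ioc (u ε) (v ε), G ε x) - ε * L) := by
    field_simp
  rw [hrw, abs_mul, abs_of_pos (by positivity : (0:ℝ) < 1 / ε)]
  calc 1 / ε * |(∫ x in Ioc (u ε) (v ε), G ε x) - ε * L|
      ≤ 1 / ε * (η / 2 * ε) := by
        apply mul_le_mul_of_nonneg_left key (by positivity)
    _ = η / 2 := by field_simp
    _ < η := by linarith

/-- Corollary `I_1 for unimodal`: the L1-Fisher information of a unimodal, piecewise
continuous probability density on ℝ exists and equals twice its essential supremum. -/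
theorem l1Fisher_unimodal
    (f : ℝ → ℝ) (hf0 : ∀ x, 0 ≤ f x) (hfm : Measurable f) (hf1 : ∫ x, f x = 1)
    (hunimodal : ∃ m : ℝ, MonotoneOn f (Set.Iic m) ∧ AntitoneOn f (Set.Ici m))
    (M : ℕ) (a : Fin M → ℝ) (ha : StrictMono a)
    (hcont : ∀ i : Fin (M + 1), ContinuousOn f
      {x : ℝ | (∀ j : Fin M, (j : ℕ) < (i : ℕ) → a j < x) ∧
               (∀ j : Fin M, (i : ℕ) ≤ (j : ℕ) → x < a j)})
    (hlim : ∀ i : Fin M,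
      (∃ l : ℝ, Tendsto f (𝓝[<] (a i)) (𝓝 l)) ∧
      (∃ r : ℝ, Tendsto f (𝓝[>] (a i)) (𝓝 r))) :
    Tendsto (fun ε : ℝ => (1 / ε) * ∫ x : ℝ, |f x - f (x - ε)|) (𝓝[>] (0 : ℝ))
      (𝓝 (2 * essSup f volume)) := by
  obtain ⟨m, hmono, hanti⟩ := hunimodal
  -- f is integrable
  have hfint : Integrable f := by
    by_contra h
    rw [integral_undef h] at hf1
    exact one_ne_zero hf1.symm
  -- f is bounded by f m
  have hub : ∀ x, f x ≤ f m := by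
    intro x
    rcases le_total x m with h | h
    · exact hmono h (le_refl m) h
    · exact hanti (le_refl m) h h
  set Lm := sSup (f '' Iio m) with hLm_def
  set Lp := sSup (f '' Ioi m) with hLp_def
  have hbddm : BddAbove (f '' Iio m) := ⟨f m, by rintro y ⟨x, -, rfl⟩; exact hub x⟩
  have hbddp : BddAbove (f '' Ioi m) := ⟨f m, by rintro y ⟨x, -, rfl⟩; exact hub x⟩
  have hLm : Tendsto f (𝓝[<] m) (𝓝 Lm) :=
    (hmono.mono Iio_subset_Iic_self).tendsto_nhdsLT hbddm
  have hLp : Tendsto f (𝓝[>] m) (𝓝 Lp) :=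
    (hanti.mono Ioi_subset_Ici_self).tendsto_nhdsGT hbddp
  -- essSup f = max Lm Lp
  have hmaxmem : volume {x : ℝ | max Lm Lp < f x} = 0 := by
    have hsub : {x : ℝ | max Lm Lp < f x} ⊆ {m} := by
      intro x hx
      simp only [mem_setOf_eq] at hx
      by_contra hxm
      rcases lt_or_gt_of_ne hxm with h | h
      · exact absurd ((le_csSup hbddm (mem_image_of_mem f h)).trans (le_max_left _ _))
          (not_le.2 hx)
      · exact absurd ((le_csSup hbddp (mem_image_of_mem f h)).trans (le_max_right _ _))
          (not_le.2 hx)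
    exact measure_mono_null hsub (measure_singleton m)
  have hess : essSup f volume = max Lm Lp := by
    rw [essSup_eq_sInf]
    apply le_antisymm
    · apply csInf_le
      · refine ⟨0, fun b hb => ?_⟩
        by_contra hb0
        push_neg at hb0
        have huniv : {x : ℝ | b < f x} = univ :=
          eq_univ_of_forall fun x => lt_of_lt_of_le hb0 (hf0 x)
        simp only [mem_setOf_eq, huniv] at hb
        simp at hb
      · exact hmaxmem
    · apply le_csInf ⟨max Lm Lp, hmaxmem⟩
      intro b hb
      simp only [mem_setOf_eq] at hb
      by_contra hbl
      push_neg at hbl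
      rcases lt_max_iff.1 hbl with h | h
      · obtain ⟨y, ⟨x0, hx0, rfl⟩, hy⟩ :=
          exists_lt_of_lt_csSup ((nonempty_Iio (a := m)).image f) h
        have hsub : Ico x0 m ⊆ {x : ℝ | b < f x} := by
          intro z hz
          exact lt_of_lt_of_le hy (hmono (mem_Iic.2 hx0.le) (mem_Iic.2 hz.2.le) hz.1)
        have h0 := measure_mono_null hsub hb
        rw [Real.volume_Ico] at h0
        rw [ENNReal.ofReal_eq_zero] at h0
        have hx0' : x0 < m := hx0
        linarith
      · obtain ⟨y, ⟨x0, hx0, rfl⟩, hy⟩ :=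
          exists_lt_of_lt_csSup ((nonempty_Ioi (a := m)).image f) h
        have hsub : Ioc m x0 ⊆ {x : ℝ | b < f x} := by
          intro z hz
          exact lt_of_lt_of_le hy (hanti (mem_Ici.2 hz.1.le) (mem_Ici.2 (le_of_lt hx0)) hz.2)
        have h0 := measure_mono_null hsub hb
        rw [Real.volume_Ioc] at h0
        rw [ENNReal.ofReal_eq_zero] at h0
        have hx0' : m < x0 := hx0
        linarith
  -- exact decomposition of the integral for ε > 0
  have hdecomp : ∀ ε : ℝ, 0 < ε →
      ∫ x : ℝ, |f x - f (x - ε)| =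
        (∫ x in Ioc (m - ε) m, f x) + (∫ x in Ioc m (m + ε), |f x - f (x - ε)|)
          + (∫ x in Ioc m (m + ε), f x) := by
    intro ε hε
    have hfε : Integrable (fun x : ℝ => f (x - ε)) := hfint.comp_sub_right ε
    have hg : Integrable (fun x : ℝ => |f x - f (x - ε)|) := (hfint.sub hfε).abs
    have h1 : ∫ x : ℝ, |f x - f (x - ε)| =
        (∫ x in Iic m, |f x - f (x - ε)|) + ∫ x in Ioi m, |f x - f (x - ε)| := by
      rw [← setIntegral_union (Iic_disjoint_Ioi le_rfl) measurableSet_Ioi hg.integrableOn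
        hg.integrableOn, Iic_union_Ioi, setIntegral_univ]
    have h2 : ∫ x in Ioi m, |f x - f (x - ε)| =
        (∫ x in Ioc m (m + ε), |f x - f (x - ε)|) + ∫ x in Ioi (m + ε), |f x - f (x - ε)| := by
      rw [← setIntegral_union Ioc_disjoint_Ioi_same measurableSet_Ioi hg.integrableOn
        hg.integrableOn, Ioc_union_Ioi_eq_Ioi (by linarith)]
    have hleft : ∫ x in Iic m, |f x - f (x - ε)| = ∫ x in Ioc (m - ε) m, f x := by
      have hcg : ∀ x ∈ Iic m, |f x - f (x - ε)| = f x - f (x - ε) := by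
        intro x hx
        exact abs_of_nonneg (sub_nonneg.2 (hmono (show x - ε ∈ Iic m by
          simp only [mem_Iic] at hx ⊢; linarith) hx (by linarith)))
      rw [setIntegral_congr_fun measurableSet_Iic hcg,
        integral_sub hfint.integrableOn hfε.integrableOn, l1f_shift_Iic f m ε]
      have hsplit : ∫ x in Iic m, f x =
          (∫ x in Iic (m - ε), f x) + ∫ x in Ioc (m - ε) m, f x := by
        rw [← setIntegral_union (Iic_disjoint_Ioc le_rfl) measurableSet_Ioc
          hfint.integrableOn hfint.integrableOn, Iic_union_Ioc_eq_Iic (by linarith)]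
      rw [hsplit]; ring
    have hright : ∫ x in Ioi (m + ε), |f x - f (x - ε)| = ∫ x in Ioc m (m + ε), f x := by
      have hcg : ∀ x ∈ Ioi (m + ε), |f x - f (x - ε)| = f (x - ε) - f x := by
        intro x hx
        simp only [mem_Ioi] at hx
        rw [abs_sub_comm]
        exact abs_of_nonneg (sub_nonneg.2 (hanti (show x - ε ∈ Ici m by
          simp only [mem_Ici]; linarith) (show x ∈ Ici m by simp only [mem_Ici]; linarith)
          (by linarith)))
      rw [setIntegral_congr_fun measurableSet_Ioi hcg,
        integral_sub hfε.integrableOn hfint.integrableOn, l1f_shift_Ioi f (m + ε) ε]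
      have heq : m + ε - ε = m := by ring
      rw [heq]
      have hsplit : ∫ x in Ioi m, f x =
          (∫ x in Ioc m (m + ε), f x) + ∫ x in Ioi (m + ε), f x := by
        rw [← setIntegral_union Ioc_disjoint_Ioi_same measurableSet_Ioi
          hfint.integrableOn hfint.integrableOn, Ioc_union_Ioi_eq_Ioi (by linarith)]
      rw [hsplit]; ring
    rw [h1, h2, hleft, hright]; ring
  -- metric forms of the limits
  rw [Metric.tendsto_nhdsWithin_nhds] at hLm hLp
  -- the three averaged limits
  have hA : Tendsto (fun ε : ℝ => (1 / ε) * ∫ x in Ioc (m - ε) m, f x) (𝓝[>] 0) (𝓝 Lm) := by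
    apply l1f_avg_tendsto (fun _ x => f x) (fun ε => m - ε) (fun _ => m) Lm
      (fun ε _ => by ring) (fun ε _ => hfint.integrableOn)
    intro η hη
    obtain ⟨δ, hδ, hd⟩ := hLm η hη
    refine ⟨δ, hδ, fun ε hε hεδ => ?_⟩
    filter_upwards [l1f_ae_ne m] with x hxm hx
    have hx1 : x < m := lt_of_le_of_ne hx.2 hxm
    have hx2 : m - ε < x := hx.1
    have := hd (show x ∈ Iio m from hx1) (by rw [Real.dist_eq]; rw [abs_of_nonpos (by linarith)]; linarith)
    rw [Real.dist_eq] at this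
    exact this.le
  have hB : Tendsto (fun ε : ℝ => (1 / ε) * ∫ x in Ioc m (m + ε), f x) (𝓝[>] 0) (𝓝 Lp) := by
    apply l1f_avg_tendsto (fun _ x => f x) (fun _ => m) (fun ε => m + ε) Lp
      (fun ε _ => by ring) (fun ε _ => hfint.integrableOn)
    intro η hη
    obtain ⟨δ, hδ, hd⟩ := hLp η hη
    refine ⟨δ, hδ, fun ε hε hεδ => ?_⟩
    filter_upwards with x hx
    have := hd (show x ∈ Ioi m from hx.1)
      (by rw [Real.dist_eq]; rw [abs_of_nonneg (by linarith [hx.1.le, hx.2])]; linarith [hx.2])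
    rw [Real.dist_eq] at this
    exact this.le
  have hC : Tendsto (fun ε : ℝ => (1 / ε) * ∫ x in Ioc m (m + ε), |f x - f (x - ε)|)
      (𝓝[>] 0) (𝓝 (|Lp - Lm|)) := by
    apply l1f_avg_tendsto (fun ε x => |f x - f (x - ε)|) (fun _ => m) (fun ε => m + ε)
      (|Lp - Lm|) (fun ε _ => by ring)
      (fun ε _ => ((hfint.sub (hfint.comp_sub_right ε)).abs).integrableOn)
    intro η hη
    obtain ⟨δ₁, hδ₁, hd₁⟩ := hLp (η / 2) (by linarith)
    obtain ⟨δ₂, hδ₂, hd₂⟩ := hLm (η / 2) (by linarith)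
    refine ⟨min δ₁ δ₂, lt_min hδ₁ hδ₂, fun ε hε hεδ => ?_⟩
    filter_upwards [l1f_ae_ne (m + ε)] with x hxme hx
    have hx1 : m < x := hx.1
    have hx2 : x < m + ε := lt_of_le_of_ne hx.2 hxme
    have hfx : |f x - Lp| < η / 2 := by
      have := hd₁ (show x ∈ Ioi m from hx1)
        (by rw [Real.dist_eq, abs_of_nonneg (by linarith)];
            linarith [lt_of_lt_of_le hεδ (min_le_left δ₁ δ₂)])
      rwa [Real.dist_eq] at this
    have hfxε : |f (x - ε) - Lm| < η / 2 := by
      have := hd₂ (show x - ε ∈ Iio m by simp only [mem_Iio]; linarith)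
        (by rw [Real.dist_eq, abs_of_nonpos (by linarith)];
            linarith [lt_of_lt_of_le hεδ (min_le_right δ₁ δ₂)])
      rwa [Real.dist_eq] at this
    have h1 : |f x - f (x - ε) - (Lp - Lm)| ≤ η := by
      rw [show f x - f (x - ε) - (Lp - Lm) = (f x - Lp) - (f (x - ε) - Lm) by ring]
      calc |(f x - Lp) - (f (x - ε) - Lm)| ≤ |f x - Lp| + |f (x - ε) - Lm| := abs_sub _ _
        _ ≤ η := by linarith
    exact le_trans (abs_abs_sub_abs_le_abs_sub _ _) h1
  -- combine
  have hsum := (hA.add hC).add hB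
  rw [hess, ← l1f_max_eq Lm Lp]
  apply Tendsto.congr' ?_ hsum
  filter_upwards [self_mem_nhdsWithin] with ε hε
  have hε0 : (0:ℝ) < ε := hε
  rw [hdecomp ε hε0]; ring
end

section
/- Let f : ℝ → [0,∞) be a probability density with respect to Lebesgue measure, and suppose there exist points −∞ = a_0 < a_1 < … < a_M < a_{M+1} = ∞ such that f is continuous and monotone (nondecreasing or nonincreasing) on each open interval (a_i, a_{i+1}) and the one-sided limits f(a_i⁺) and f(a_i⁻) exist and are finite for i = 1,…,M, so that the limit I_1 = lim_{ε→0⁺} (1/ε) ∫_ℝ |f(x) − f(x−ε)| dx exists. Let θ_1 < θ_2 < … < θ_N be real numbers such that f is continuous at each θ_i. Then I_1 ≥ |f(θ_1)| + ∑_{i=1}^{N−1} |f(θ_{i+1}) − f(θ_i)| + |f(θ_N)|. -/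
open MeasureTheory Filter Topology Set

lemma shift_Iic_integral (f : ℝ → ℝ) (ε t : ℝ) :
    ∫ x in Iic t, f (x - ε) = ∫ x in Iic (t - ε), f x := by
  rw [← integral_indicator measurableSet_Iic, ← integral_indicator measurableSet_Iic,
    ← integral_sub_right_eq_self (fun x => (Iic (t - ε)).indicator f x) ε]
  congr 1
  ext x
  simp only [indicator_apply, mem_Iic, sub_le_sub_iff_right]

lemma H_eq (f : ℝ → ℝ) (hfi : Integrable f) (ε t : ℝ) (hε : 0 ≤ ε) :
    ∫ x in Iic t, (f x - f (x - ε)) = ∫ x in Ioc (t - ε) t, f x := by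
  have hshift : Integrable (fun x => f (x - ε)) := hfi.comp_sub_right ε
  rw [integral_sub hfi.integrableOn hshift.integrableOn, shift_Iic_integral]
  have h := setIntegral_union (f := f) (μ := volume) (s := Iic (t - ε)) (t := Ioc (t - ε) t) (Iic_disjoint_Ioc (le_refl (t - ε)))
    measurableSet_Ioc hfi.integrableOn hfi.integrableOn
  rw [Iic_union_Ioc_eq_Iic (by linarith)] at h
  rw [h]; ring

lemma key_partition (g : ℝ → ℝ) (hg : Integrable g) (hg0 : ∫ x, g x = 0)
    (N : ℕ) (hN : 1 ≤ N) (θ : ℕ → ℝ) (hθ : ∀ i j, i < j → j < N → θ i < θ j) :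
    |∫ x in Iic (θ 0), g x|
      + ∑ i ∈ Finset.range (N - 1), |(∫ x in Iic (θ (i + 1)), g x) - ∫ x in Iic (θ i), g x|
      + |∫ x in Iic (θ (N - 1)), g x| ≤ ∫ x, |g x| := by
  have habs : ∀ s : Set ℝ, |∫ x in s, g x| ≤ ∫ x in s, |g x| := by
    intro s
    simpa [Real.norm_eq_abs] using
      norm_integral_le_integral_norm (μ := volume.restrict s) g
  have main : ∀ n, n < N → |∫ x in Iic (θ 0), g x|
      + ∑ i ∈ Finset.range n, |(∫ x in Iic (θ (i + 1)), g x) - ∫ x in Iic (θ i), g x|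
      ≤ ∫ x in Iic (θ n), |g x| := by
    intro n
    induction n with
    | zero => intro _; simpa using habs (Iic (θ 0))
    | succ n ih =>
      intro hn
      have hn' : n < N := Nat.lt_of_succ_lt hn
      have hlt : θ n < θ (n + 1) := hθ n (n + 1) (Nat.lt_succ_self n) hn
      have hdiff : (∫ x in Iic (θ (n + 1)), g x) - ∫ x in Iic (θ n), g x
          = ∫ x in Ioc (θ n) (θ (n + 1)), g x := by
        have h := setIntegral_union (f := g) (μ := volume) (s := Iic (θ n))
          (t := Ioc (θ n) (θ (n + 1))) (Iic_disjoint_Ioc (le_refl (θ n)))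
          measurableSet_Ioc hg.integrableOn hg.integrableOn
        rw [Iic_union_Ioc_eq_Iic hlt.le] at h
        rw [h]; ring
      have hsplit : ∫ x in Iic (θ (n + 1)), |g x|
          = (∫ x in Iic (θ n), |g x|) + ∫ x in Ioc (θ n) (θ (n + 1)), |g x| := by
        have h := setIntegral_union (f := fun x => |g x|) (μ := volume) (s := Iic (θ n))
          (t := Ioc (θ n) (θ (n + 1))) (Iic_disjoint_Ioc (le_refl (θ n)))
          measurableSet_Ioc hg.abs.integrableOn hg.abs.integrableOn
        rw [Iic_union_Ioc_eq_Iic hlt.le] at h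
        exact h
      have hb := habs (Ioc (θ n) (θ (n + 1)))
      rw [Finset.sum_range_succ, hdiff]
      have := ih hn'
      linarith
  have h1 := main (N - 1) (by omega)
  have h2 : ∫ x in Ioi (θ (N - 1)), g x = - ∫ x in Iic (θ (N - 1)), g x := by
    have h := intervalIntegral.integral_Iic_add_Ioi (f := g) (b := θ (N - 1)) hg.integrableOn hg.integrableOn
    rw [hg0] at h; linarith
  have h3 : |∫ x in Iic (θ (N - 1)), g x| ≤ ∫ x in Ioi (θ (N - 1)), |g x| := by
    calc |∫ x in Iic (θ (N - 1)), g x| = |∫ x in Ioi (θ (N - 1)), g x| := by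
          rw [h2, abs_neg]
      _ ≤ _ := habs _
  have h4 : ∫ x, |g x| = (∫ x in Iic (θ (N - 1)), |g x|) + ∫ x in Ioi (θ (N - 1)), |g x| :=
    (intervalIntegral.integral_Iic_add_Ioi hg.abs.integrableOn hg.abs.integrableOn).symm
  linarith

lemma avg_tendsto (f : ℝ → ℝ) (hfi : Integrable f) (t : ℝ) (hc : ContinuousAt f t) :
    Tendsto (fun ε => (1 / ε) * ∫ x in Ioc (t - ε) t, f x) (𝓝[>] (0 : ℝ)) (𝓝 (f t)) := by
  rw [Metric.tendsto_nhdsWithin_nhds]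
  intro δ hδ
  obtain ⟨η, hη, hball⟩ := Metric.continuousAt_iff.mp hc (δ / 2) (by linarith)
  refine ⟨η, hη, fun ε hε hd => ?_⟩
  have hε0 : 0 < ε := hε
  have hεη : ε < η := by rwa [Real.dist_eq, sub_zero, abs_of_pos hε0] at hd
  have hvol : volume (Ioc (t - ε) t) = ENNReal.ofReal ε := by
    rw [Real.volume_Ioc]; ring_nf
  have hvlt : volume (Ioc (t - ε) t) < ⊤ := by rw [hvol]; exact ENNReal.ofReal_lt_top
  have hci : IntegrableOn (fun _ : ℝ => f t) (Ioc (t - ε) t) := by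
    apply integrableOn_const hvlt.ne
  have hconst : ∫ _ in Ioc (t - ε) t, f t = ε * f t := by
    rw [setIntegral_const, measureReal_def, hvol, ENNReal.toReal_ofReal hε0.le, smul_eq_mul]
  have hsub : (1 / ε) * (∫ x in Ioc (t - ε) t, f x) - f t
      = (1 / ε) * ∫ x in Ioc (t - ε) t, (f x - f t) := by
    rw [integral_sub hfi.integrableOn hci, hconst]
    field_simp
  have hbound : ‖∫ x in Ioc (t - ε) t, (f x - f t)‖
      ≤ (δ / 2) * (volume (Ioc (t - ε) t)).toReal := by
    apply norm_setIntegral_le_of_norm_le_const hvlt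
    intro x hx
    have hdx : dist x t < η := by
      rw [Real.dist_eq, abs_lt]
      constructor <;> [linarith [hx.1]; linarith [hx.2, hε0]]
    have := hball hdx
    rw [Real.dist_eq] at this
    simpa [Real.norm_eq_abs] using this.le
  rw [hvol, ENNReal.toReal_ofReal hε0.le] at hbound
  rw [Real.norm_eq_abs] at hbound
  rw [Real.dist_eq, hsub, abs_mul, abs_of_pos (by positivity : (0:ℝ) < 1 / ε)]
  calc 1 / ε * |∫ x in Ioc (t - ε) t, (f x - f t)| ≤ 1 / ε * (δ / 2 * ε) := by
        apply mul_le_mul_of_nonneg_left hbound (by positivity)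
    _ = δ / 2 := by field_simp
    _ < δ := by linarith

/-- Corollary `I_1 single var ineq`: lower bound on the L1-Fisher information of a
piecewise continuous, piecewise monotone density using its values at finitely many
continuity points `θ 0 < θ 1 < ⋯ < θ (N-1)`. -/
theorem l1Fisher_lower_bound_sampled
    (f : ℝ → ℝ) (hf0 : ∀ x, 0 ≤ f x) (hfm : Measurable f) (hf1 : ∫ x, f x = 1)
    (M : ℕ) (a : Fin M → ℝ) (ha : StrictMono a)
    (hcont : ∀ i : Fin (M + 1), ContinuousOn f
      {x : ℝ | (∀ j : Fin M, (j : ℕ) < (i : ℕ) → a j < x) ∧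
               (∀ j : Fin M, (i : ℕ) ≤ (j : ℕ) → x < a j)})
    (hmono : ∀ i : Fin (M + 1),
      MonotoneOn f
        {x : ℝ | (∀ j : Fin M, (j : ℕ) < (i : ℕ) → a j < x) ∧
                 (∀ j : Fin M, (i : ℕ) ≤ (j : ℕ) → x < a j)} ∨
      AntitoneOn f
        {x : ℝ | (∀ j : Fin M, (j : ℕ) < (i : ℕ) → a j < x) ∧
                 (∀ j : Fin M, (i : ℕ) ≤ (j : ℕ) → x < a j)})
    (hlim : ∀ i : Fin M,
      (∃ l : ℝ, Tendsto f (𝓝[<] (a i)) (𝓝 l)) ∧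
      (∃ r : ℝ, Tendsto f (𝓝[>] (a i)) (𝓝 r)))
    (I₁ : ℝ)
    (hI₁ : Tendsto (fun ε : ℝ => (1 / ε) * ∫ x : ℝ, |f x - f (x - ε)|) (𝓝[>] (0 : ℝ))
      (𝓝 I₁))
    (N : ℕ) (hN : 1 ≤ N) (θ : ℕ → ℝ)
    (hθ : ∀ i j, i < j → j < N → θ i < θ j)
    (hθcont : ∀ i, i < N → ContinuousAt f (θ i)) :
    |f (θ 0)| + (∑ i ∈ Finset.range (N - 1), |f (θ (i + 1)) - f (θ i)|) + |f (θ (N - 1))|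
      ≤ I₁ := by
  have hfi : Integrable f := integrable_of_integral_eq_one hf1
  set G : ℝ → ℝ → ℝ := fun ε t => (1 / ε) * ∫ x in Ioc (t - ε) t, f x with hG
  have hΦle : ∀ ε ∈ Ioi (0 : ℝ),
      |G ε (θ 0)| + (∑ i ∈ Finset.range (N - 1), |G ε (θ (i + 1)) - G ε (θ i)|)
          + |G ε (θ (N - 1))|
        ≤ (1 / ε) * ∫ x, |f x - f (x - ε)| := by
    intro ε hε
    have hε0 : (0 : ℝ) < ε := hε
    have hinv : (0 : ℝ) < 1 / ε := by positivity
    set g : ℝ → ℝ := fun x => f x - f (x - ε) with hgdef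
    have hg : Integrable g := hfi.sub (hfi.comp_sub_right ε)
    have hg0 : ∫ x, g x = 0 := by
      rw [hgdef, integral_sub hfi (hfi.comp_sub_right ε),
        integral_sub_right_eq_self f ε, sub_self]
    have hIoc : ∀ s : ℝ, ∫ x in Ioc (s - ε) s, f x = ∫ x in Iic s, g x :=
      fun s => (H_eq f hfi ε s hε0.le).symm
    have hkey := key_partition g hg hg0 N hN θ hθ
    have hmul := mul_le_mul_of_nonneg_left hkey hinv.le
    refine le_trans (le_of_eq ?_) hmul
    simp only [hG, hIoc, ← mul_sub, abs_mul, abs_of_pos hinv, mul_add, Finset.mul_sum]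
  have hΦ : Tendsto (fun ε => |G ε (θ 0)|
        + (∑ i ∈ Finset.range (N - 1), |G ε (θ (i + 1)) - G ε (θ i)|) + |G ε (θ (N - 1))|)
      (𝓝[>] (0 : ℝ))
      (𝓝 (|f (θ 0)| + (∑ i ∈ Finset.range (N - 1), |f (θ (i + 1)) - f (θ i)|)
        + |f (θ (N - 1))|)) := by
    have hGt : ∀ i, i < N → Tendsto (fun ε => G ε (θ i)) (𝓝[>] (0 : ℝ)) (𝓝 (f (θ i))) :=
      fun i hi => avg_tendsto f hfi (θ i) (hθcont i hi)
    apply Tendsto.add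
    apply Tendsto.add
    · exact (hGt 0 (by omega)).abs
    · apply tendsto_finset_sum
      intro i hi
      have hi' := Finset.mem_range.mp hi
      exact ((hGt (i + 1) (by omega)).sub (hGt i (by omega))).abs
    · exact (hGt (N - 1) (by omega)).abs
  exact le_of_tendsto_of_tendsto hΦ hI₁ (eventually_nhdsWithin_of_forall hΦle)
end

section
/- Let a < b be real numbers and let f : ℝ → ℝ be continuous and monotone (nondecreasing or nonincreasing) on the open interval (a,b), with finite one-sided limits f(a⁺) = lim_{x→a⁺} f(x) and f(b⁻) = lim_{x→b⁻} f(x). Then lim_{ε→0⁺} (1/ε) ∫_{a+ε}^{b} |f(x) − f(x−ε)| dx = |f(b⁻) − f(a⁺)|. -/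
open MeasureTheory Filter Topology

private lemma aux_mono
    (a b : ℝ) (hab : a < b) (f : ℝ → ℝ)
    (hcont : ContinuousOn f (Set.Ioo a b))
    (hmono : MonotoneOn f (Set.Ioo a b))
    (A B : ℝ)
    (hA : Tendsto f (𝓝[>] a) (𝓝 A))
    (hB : Tendsto f (𝓝[<] b) (𝓝 B)) :
    Tendsto (fun ε : ℝ => (1 / ε) * ∫ x in (a + ε)..b, |f x - f (x - ε)|)
      (𝓝[>] (0 : ℝ)) (𝓝 |B - A|) := by
  set g : ℝ → ℝ := fun x => if x ≤ a then A else if x < b then f x else B with hg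
  have hfg : ∀ x ∈ Set.Ioo a b, g x = f x := by
    intro x hx
    simp [hg, not_le.2 hx.1, hx.2]
  have hga : g a = A := by simp [hg]
  have hgb : g b = B := by simp [hg, not_le.2 hab]
  have hfB : ∀ x ∈ Set.Ioo a b, f x ≤ B := by
    intro x hx
    refine ge_of_tendsto hB ?_
    filter_upwards [Ioo_mem_nhdsLT_of_mem (⟨hx.2, le_rfl⟩ : b ∈ Set.Ioc x b)] with s hs
    exact hmono hx ⟨hx.1.trans hs.1, hs.2⟩ hs.1.le
  have hAf : ∀ x ∈ Set.Ioo a b, A ≤ f x := by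
    intro x hx
    refine le_of_tendsto hA ?_
    filter_upwards [Ioo_mem_nhdsGT_of_mem (⟨le_rfl, hx.1⟩ : a ∈ Set.Ico a x)] with s hs
    exact hmono ⟨hs.1, hs.2.trans hx.2⟩ hx hs.2.le
  have hmid : (a + b) / 2 ∈ Set.Ioo a b := ⟨by linarith, by linarith⟩
  have hAB : A ≤ B := (hAf _ hmid).trans (hfB _ hmid)
  have hgmono : Monotone g := by
    intro x y hxy
    by_cases hya : y ≤ a
    · simp [hg, hxy.trans hya, hya]
    · by_cases hyb : y < b
      · have hy : y ∈ Set.Ioo a b := ⟨not_le.1 hya, hyb⟩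
        by_cases hxa : x ≤ a
        · simpa [hg, hxa, hya, hyb] using hAf y hy
        · have hx : x ∈ Set.Ioo a b := ⟨not_le.1 hxa, lt_of_le_of_lt hxy hyb⟩
          simpa [hg, hxa, hx.2, hya, hyb] using hmono hx hy hxy
      · by_cases hxa : x ≤ a
        · simpa [hg, hxa, hya, hyb] using hAB
        · by_cases hxb : x < b
          · have hx : x ∈ Set.Ioo a b := ⟨not_le.1 hxa, hxb⟩
            simpa [hg, hxa, hxb, hya, hyb] using hfB x hx
          · simp [hg, hxa, hxb, hya, hyb]
  have hgcont : Continuous g := by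
    rw [continuous_iff_continuousAt]
    intro x
    rcases lt_trichotomy x a with h | h | h
    · have : g =ᶠ[𝓝 x] fun _ => A := by
        filter_upwards [Iio_mem_nhds h] with s hs
        have hs' : s < a := hs
        simp [hg, hs'.le]
      exact continuousAt_const.congr this.symm
    · subst h
      unfold ContinuousAt
      rw [hga, ← nhdsLE_sup_nhdsGT x, tendsto_sup]
      constructor
      · refine tendsto_const_nhds.congr' ?_
        filter_upwards [self_mem_nhdsWithin] with s hs
        have hs' : s ≤ x := hs
        simp [hg, hs']
      · refine hA.congr' ?_
        filter_upwards [Ioo_mem_nhdsGT_of_mem (⟨le_rfl, hab⟩ : x ∈ Set.Ico x b)] with s hs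
        exact (hfg s hs).symm
    · rcases lt_trichotomy x b with h2 | h2 | h2
      · have hx : x ∈ Set.Ioo a b := ⟨h, h2⟩
        refine (hcont.continuousAt (isOpen_Ioo.mem_nhds hx)).congr ?_
        filter_upwards [isOpen_Ioo.mem_nhds hx] with s hs
        exact (hfg s hs).symm
      · subst h2
        unfold ContinuousAt
        rw [hgb, ← nhdsLT_sup_nhdsGE x, tendsto_sup]
        constructor
        · refine hB.congr' ?_
          filter_upwards [Ioo_mem_nhdsLT_of_mem (⟨hab, le_rfl⟩ : x ∈ Set.Ioc a x)] with s hs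
          exact (hfg s hs).symm
        · refine tendsto_const_nhds.congr' ?_
          filter_upwards [self_mem_nhdsWithin] with s hs
          simp [hg, not_le.2 (lt_of_lt_of_le hab hs), not_lt.2 (Set.mem_Ici.1 hs)]
      · have : g =ᶠ[𝓝 x] fun _ => B := by
        -- x > b
          filter_upwards [Ioi_mem_nhds h2] with s hs
          simp [hg, not_le.2 (hab.trans hs), not_lt.2 (le_of_lt (Set.mem_Ioi.1 hs))]
        exact continuousAt_const.congr this.symm
  have hgint : ∀ u v : ℝ, IntervalIntegrable g volume u v := fun u v =>
    hgcont.intervalIntegrable u v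
  set F : ℝ → ℝ := fun u => ∫ t in a..u, g t with hF
  have hFd : ∀ x : ℝ, HasDerivAt F (g x) x := fun x =>
    intervalIntegral.integral_hasDerivAt_right (hgint a x)
      hgcont.stronglyMeasurable.stronglyMeasurableAtFilter hgcont.continuousAt
  -- boundary averages
  have hTb : Tendsto (fun ε : ℝ => (1 / ε) * (F b - F (b - ε))) (𝓝[>] (0 : ℝ)) (𝓝 B) := by
    have hs := hasDerivAt_iff_tendsto_slope.1 (hFd b)
    rw [hgb] at hs
    have hmap : Tendsto (fun ε : ℝ => b - ε) (𝓝[>] (0 : ℝ)) (𝓝[≠] b) := by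
      rw [tendsto_nhdsWithin_iff]
      constructor
      · have : Tendsto (fun ε : ℝ => b - ε) (𝓝 (0 : ℝ)) (𝓝 (b - 0)) :=
          (tendsto_const_nhds.sub tendsto_id)
        simpa using this.mono_left nhdsWithin_le_nhds
      · filter_upwards [self_mem_nhdsWithin] with ε hε
        have : (0 : ℝ) < ε := hε
        simp only [Set.mem_compl_iff, Set.mem_singleton_iff]
        intro hc; nlinarith [sub_eq_self.1 hc]
    refine (hs.comp hmap).congr' ?_
    filter_upwards [self_mem_nhdsWithin] with ε hε
    have hε0 : (0 : ℝ) < ε := hε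
    show slope F b (b - ε) = (1 / ε) * (F b - F (b - ε))
    rw [slope_def_field, show b - ε - b = -ε from by ring, div_neg, ← neg_div, neg_sub,
      one_div_mul_eq_div]
  have hTa : Tendsto (fun ε : ℝ => (1 / ε) * (F (a + ε) - F a)) (𝓝[>] (0 : ℝ)) (𝓝 A) := by
    have hs := hasDerivAt_iff_tendsto_slope.1 (hFd a)
    rw [hga] at hs
    have hmap : Tendsto (fun ε : ℝ => a + ε) (𝓝[>] (0 : ℝ)) (𝓝[≠] a) := by
      rw [tendsto_nhdsWithin_iff]
      constructor
      · have : Tendsto (fun ε : ℝ => a + ε) (𝓝 (0 : ℝ)) (𝓝 (a + 0)) :=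
          (tendsto_const_nhds.add tendsto_id)
        simpa using this.mono_left nhdsWithin_le_nhds
      · filter_upwards [self_mem_nhdsWithin] with ε hε
        have : (0 : ℝ) < ε := hε
        simp only [Set.mem_compl_iff, Set.mem_singleton_iff]
        intro hc; nlinarith [add_eq_left.1 hc]
    refine (hs.comp hmap).congr' ?_
    filter_upwards [self_mem_nhdsWithin] with ε hε
    have hε0 : (0 : ℝ) < ε := hε
    show slope F a (a + ε) = (1 / ε) * (F (a + ε) - F a)
    rw [slope_def_field, show a + ε - a = ε from by ring, one_div_mul_eq_div]
  have hlim : Tendsto (fun ε : ℝ => (1 / ε) * (F b - F (b - ε)) - (1 / ε) * (F (a + ε) - F a))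
      (𝓝[>] (0 : ℝ)) (𝓝 (B - A)) := hTb.sub hTa
  have habs : |B - A| = B - A := abs_of_nonneg (sub_nonneg.2 hAB)
  rw [habs]
  refine hlim.congr' ?_
  filter_upwards [Ioo_mem_nhdsGT_of_mem (⟨le_rfl, sub_pos.2 hab⟩ : (0:ℝ) ∈ Set.Ico 0 (b - a))]
    with ε hε
  obtain ⟨hε0, hεb⟩ := hε
  have hεb' : a + ε < b := by linarith
  -- Step 1: replace |f x - f (x-ε)| with g x - g (x-ε) a.e.
  have hne : ∀ᵐ x : ℝ, x ≠ b := by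
    have : (volume : Measure ℝ) {b} = 0 := measure_singleton b
    rw [ae_iff]
    simp only [ne_eq, not_not, Set.setOf_eq_eq_singleton]
    exact this
  have step1 : (∫ x in (a + ε)..b, |f x - f (x - ε)|) = ∫ x in (a + ε)..b, (g x - g (x - ε)) := by
    refine intervalIntegral.integral_congr_ae ?_
    filter_upwards [hne] with x hx hmem
    rw [Set.uIoc_of_le hεb'.le] at hmem
    have hx1 : x ∈ Set.Ioo a b := ⟨by linarith [hmem.1], lt_of_le_of_ne hmem.2 hx⟩
    have hx2 : x - ε ∈ Set.Ioo a b := ⟨by linarith [hmem.1], by linarith [hx1.2]⟩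
    rw [← hfg x hx1, ← hfg _ hx2]
    exact abs_of_nonneg (sub_nonneg.2 (hgmono (by linarith : x - ε ≤ x)))
  have step2 : (∫ x in (a + ε)..b, (g x - g (x - ε)))
      = (∫ x in (a + ε)..b, g x) - ∫ x in a..(b - ε), g x := by
    have hc : Continuous fun x : ℝ => g (x - ε) := hgcont.comp (continuous_sub_right ε)
    rw [intervalIntegral.integral_sub (hgint _ _) (hc.intervalIntegrable _ _)]
    congr 1
    rw [intervalIntegral.integral_comp_sub_right (fun x => g x) ε]
    norm_num
  have add1 : (∫ x in a..(a + ε), g x) + (∫ x in (a + ε)..b, g x) = ∫ x in a..b, g x :=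
    intervalIntegral.integral_add_adjacent_intervals (hgint _ _) (hgint _ _)
  have add2 : (∫ x in a..(b - ε), g x) + (∫ x in (b - ε)..b, g x) = ∫ x in a..b, g x :=
    intervalIntegral.integral_add_adjacent_intervals (hgint _ _) (hgint _ _)
  have hFa : F a = 0 := intervalIntegral.integral_same
  have key : (∫ x in (a + ε)..b, g x) - (∫ x in a..(b - ε), g x)
      = (F b - F (b - ε)) - (F (a + ε) - F a) := by
    have e1 : F b = ∫ x in a..b, g x := rfl
    have e2 : F (b - ε) = ∫ x in a..(b - ε), g x := rfl
    have e3 : F (a + ε) = ∫ x in a..(a + ε), g x := rfl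
    rw [e1, e2, e3, hFa]
    linarith [add1, add2]
  show (1 / ε) * (F b - F (b - ε)) - (1 / ε) * (F (a + ε) - F a)
      = (1 / ε) * ∫ x in (a + ε)..b, |f x - f (x - ε)|
  rw [step1, step2, key]
  ring

/-- Contribution of one interval of monotonicity to the L1-Fisher information:
`lim_{ε→0+} (1/ε) ∫_{a+ε}^{b} |f(x) − f(x−ε)| dx = |f(b⁻) − f(a⁺)|`. -/
theorem l1Fisher_monotone_interval_contribution
    (a b : ℝ) (hab : a < b) (f : ℝ → ℝ)
    (hcont : ContinuousOn f (Set.Ioo a b))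
    (hmono : MonotoneOn f (Set.Ioo a b) ∨ AntitoneOn f (Set.Ioo a b))
    (A B : ℝ)
    (hA : Tendsto f (𝓝[>] a) (𝓝 A))
    (hB : Tendsto f (𝓝[<] b) (𝓝 B)) :
    Tendsto (fun ε : ℝ => (1 / ε) * ∫ x in (a + ε)..b, |f x - f (x - ε)|)
      (𝓝[>] (0 : ℝ)) (𝓝 |B - A|) := by
  rcases hmono with hm | hm
  · exact aux_mono a b hab f hcont hm A B hA hB
  · have h := aux_mono a b hab (fun x => -f x) (hcont.neg) hm.neg (-A) (-B) hA.neg hB.neg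
    have h1 : |(-B) - (-A)| = |B - A| := by rw [show (-B) - (-A) = -(B - A) by ring, abs_neg]
    rw [h1] at h
    refine h.congr fun ε => ?_
    congr 1
    apply intervalIntegral.integral_congr
    intro x _
    simp only
    rw [show -f x - -f (x - ε) = -(f x - f (x - ε)) by ring, abs_neg]
end

section
/- Let a ∈ ℝ and δ > 0, and let f : ℝ → ℝ be continuous and monotone (nondecreasing or nonincreasing) on each of the open intervals (a−δ, a) and (a, a+δ), with finite one-sided limits f(a⁻) = lim_{x→a⁻} f(x) and f(a⁺) = lim_{x→a⁺} f(x). Then lim_{ε→0⁺} (1/ε) ∫_{a}^{a+ε} |f(x) − f(x−ε)| dx = |f(a⁺) − f(a⁻)|. -/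
open MeasureTheory Filter Topology

/-- Contribution of a jump discontinuity to the L1-Fisher information:
`lim_{ε→0+} (1/ε) ∫_{a}^{a+ε} |f(x) − f(x−ε)| dx = |f(a⁺) − f(a⁻)|`. -/
theorem l1Fisher_jump_contribution
    (a δ : ℝ) (hδ : 0 < δ) (f : ℝ → ℝ)
    (hcontl : ContinuousOn f (Set.Ioo (a - δ) a))
    (hcontr : ContinuousOn f (Set.Ioo a (a + δ)))
    (hmonol : MonotoneOn f (Set.Ioo (a - δ) a) ∨ AntitoneOn f (Set.Ioo (a - δ) a))
    (hmonor : MonotoneOn f (Set.Ioo a (a + δ)) ∨ AntitoneOn f (Set.Ioo a (a + δ)))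
    (L R : ℝ)
    (hL : Tendsto f (𝓝[<] a) (𝓝 L))
    (hR : Tendsto f (𝓝[>] a) (𝓝 R)) :
    Tendsto (fun ε : ℝ => (1 / ε) * ∫ x in a..(a + ε), |f x - f (x - ε)|)
      (𝓝[>] (0 : ℝ)) (𝓝 |R - L|) := by
  rw [Metric.tendsto_nhdsWithin_nhds]
  intro η hη
  obtain ⟨d1, hd1, h1⟩ := Metric.tendsto_nhdsWithin_nhds.mp hR (η / 4) (by linarith)
  obtain ⟨d2, hd2, h2⟩ := Metric.tendsto_nhdsWithin_nhds.mp hL (η / 4) (by linarith)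
  refine ⟨min δ (min d1 d2), by positivity, ?_⟩
  intro ε hε hdist
  have hε0 : (0 : ℝ) < ε := hε
  rw [Real.dist_eq, sub_zero, abs_of_pos hε0] at hdist
  have hεδ : ε < δ := lt_of_lt_of_le hdist (min_le_left _ _)
  have hεd1 : ε < d1 := lt_of_lt_of_le hdist ((min_le_right _ _).trans (min_le_left _ _))
  have hεd2 : ε < d2 := lt_of_lt_of_le hdist ((min_le_right _ _).trans (min_le_right _ _))
  set g : ℝ → ℝ := fun x => |f x - f (x - ε)| with hg
  -- pointwise bounds on Ioo a (a+ε)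
  have key : ∀ x ∈ Set.Ioo a (a + ε), |g x - (|R - L|)| ≤ η / 2 := by
    intro x hx
    obtain ⟨hxa, hxb⟩ := hx
    have hx1 : dist (f x) R < η / 4 := by
      apply h1 hxa
      rw [Real.dist_eq, abs_of_pos (by linarith : (0:ℝ) < x - a)]
      linarith
    have hx2 : dist (f (x - ε)) L < η / 4 := by
      apply h2 (show x - ε ∈ Set.Iio a by simp only [Set.mem_Iio]; linarith)
      rw [Real.dist_eq, abs_of_neg (by linarith : x - ε - a < 0)]
      linarith
    rw [Real.dist_eq] at hx1 hx2
    have h3 : |f x - f (x - ε) - (R - L)| ≤ |f x - R| + |f (x - ε) - L| := by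
      have : f x - f (x - ε) - (R - L) = (f x - R) - (f (x - ε) - L) := by ring
      rw [this]; exact abs_sub _ _
    calc |g x - (|R - L|)| ≤ |f x - f (x - ε) - (R - L)| := abs_abs_sub_abs_le_abs_sub _ _
      _ ≤ |f x - R| + |f (x - ε) - L| := h3
      _ ≤ η / 2 := by linarith
  have hub : ∀ x ∈ Set.Ioo a (a + ε), g x ≤ |R - L| + η / 2 := by
    intro x hx
    have := (abs_le.mp (key x hx)).2
    linarith
  have hlb : ∀ x ∈ Set.Ioo a (a + ε), |R - L| - η / 2 ≤ g x := by
    intro x hx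
    have := (abs_le.mp (key x hx)).1
    linarith
  -- continuity of g on the open interval
  have c1 : ContinuousOn f (Set.Ioo a (a + ε)) :=
    hcontr.mono (Set.Ioo_subset_Ioo le_rfl (by linarith))
  have c2 : ContinuousOn (fun x => f (x - ε)) (Set.Ioo a (a + ε)) := by
    apply hcontl.comp (continuous_sub_right ε).continuousOn
    intro x hx
    obtain ⟨hxa, hxb⟩ := hx
    have : x - ε ∈ Set.Ioo (a - δ) a := ⟨by linarith, by linarith⟩
    exact this
  have hcont : ContinuousOn g (Set.Ioo a (a + ε)) := (c1.sub c2).abs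
  -- integrability
  have hint : IntegrableOn g (Set.Ioo a (a + ε)) := by
    haveI : IsFiniteMeasure (volume.restrict (Set.Ioo a (a + ε))) :=
      ⟨by rw [Measure.restrict_apply_univ, Real.volume_Ioo]; exact ENNReal.ofReal_lt_top⟩
    refine ⟨hcont.aestronglyMeasurable measurableSet_Ioo, ?_⟩
    apply HasFiniteIntegral.of_bounded (C := |R - L| + η / 2)
    filter_upwards [ae_restrict_mem measurableSet_Ioo] with x hx
    rw [Real.norm_eq_abs, abs_abs]
    exact hub x hx
  have hIoc : (∫ x in a..(a + ε), |f x - f (x - ε)|) = ∫ x in Set.Ioo a (a + ε), g x := by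
    rw [intervalIntegral.integral_of_le (by linarith), integral_Ioc_eq_integral_Ioo]
  have hvol : (volume (Set.Ioo a (a + ε))).toReal = ε := by
    rw [Real.volume_Ioo, ENNReal.toReal_ofReal (by linarith)]
    ring
  have hIub : (∫ x in Set.Ioo a (a + ε), g x) ≤ ε * (|R - L| + η / 2) := by
    have := setIntegral_mono_on hint ((integrableOn_const_iff).mpr
      (Or.inr (by rw [Real.volume_Ioo]; exact ENNReal.ofReal_lt_top))) measurableSet_Ioo hub
    rwa [setIntegral_const, measureReal_def, hvol, smul_eq_mul] at this
  have hIlb : ε * (|R - L| - η / 2) ≤ ∫ x in Set.Ioo a (a + ε), g x := by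
    have := setIntegral_mono_on ((integrableOn_const_iff).mpr
      (Or.inr (by rw [Real.volume_Ioo]; exact ENNReal.ofReal_lt_top))) hint measurableSet_Ioo hlb
    rwa [setIntegral_const, measureReal_def, hvol, smul_eq_mul] at this
  rw [Real.dist_eq, hIoc]
  have hmain : |(1 / ε * ∫ x in Set.Ioo a (a + ε), g x) - (|R - L|)| ≤ η / 2 := by
    rw [abs_le]
    constructor
    · rw [le_sub_iff_add_le, one_div, inv_mul_eq_div, le_div_iff₀ hε0]
      nlinarith [hIlb]
    · rw [sub_le_iff_le_add, one_div, inv_mul_eq_div, div_le_iff₀ hε0]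
      nlinarith [hIub]
  linarith
end
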